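/- Let E be a pseudo-effect algebra and n ≥ 1. Then E admits an (n+1)-valued discrete state if and only if there exist nonempty pairwise disjoint subsets E₀, E₁, ..., Eₙ of E whose union is E, such that (c) Eᵢ⁻ = Eᵢ~ = E_{n−i} for all i, and (d) if x ∈ Eᵢ, y ∈ Eⱼ and x+y exists in E, then i+j ≤ n and x+y ∈ E_{i+j}. -/

import Mathlib

/-- A pseudo-effect algebra (PEA): a structure with a partial addition `add`
(with domain of definition `D`), a zero and a one, satisfying (PE1)-(PE4)
together with the (derivable) neutrality of zero. -/
structure PEA (E : Type) where
  /-- `D a b` means that the partial sum `a + b` is defined. -/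
  D : E → E → Prop
  /-- The partial addition (its value is relevant only when `D a b` holds). -/
  add : E → E → E
  zero : E
  one : E
  /-- (PE1), definedness part. -/
  assoc_defined : ∀ a b c, (D a b ∧ D (add a b) c) ↔ (D b c ∧ D a (add b c))
  /-- (PE1), equality part. -/
  assoc_eq : ∀ a b c, D a b → D (add a b) c → add (add a b) c = add a (add b c)
  /-- (PE2), right complement. -/
  compl_right : ∀ a, ∃! d, D a d ∧ add a d = one
  /-- (PE2), left complement. -/
  compl_left : ∀ a, ∃! e, D e a ∧ add e a = one
  /-- (PE3). -/
  pe3 : ∀ a b, D a b →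
    (∃ d, D d a ∧ add d a = add a b) ∧ (∃ e, D b e ∧ add b e = add a b)
  /-- (PE4). -/
  pe4_right : ∀ a, D a one → a = zero
  pe4_left : ∀ a, D one a → a = zero
  D_zero_right : ∀ a, D a zero
  D_zero_left : ∀ a, D zero a
  add_zero : ∀ a, add a zero = a
  zero_add : ∀ a, add zero a = a

namespace PEA

variable {E : Type} (P : PEA E)

/-- The induced partial order: `a ≤ b` iff `a + c = b` for some `c`. -/
def le (a b : E) : Prop := ∃ c, P.D a c ∧ P.add a c = b

/-- The left complement `a⁻`, the unique element with `a⁻ + a = 1`. -/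
noncomputable def lneg (a : E) : E := (P.compl_left a).choose

/-- The right complement `a~`, the unique element with `a + a~ = 1`. -/
noncomputable def rneg (a : E) : E := (P.compl_right a).choose

/-- `E` is weakly commutative if `a + b` is defined iff `b + a` is defined. -/
def WeaklyCommutative : Prop := ∀ a b, P.D a b ↔ P.D b a

/-- `E` is symmetric if the two complements coincide. -/
def Symmetric : Prop := ∀ a, P.lneg a = P.rneg a

/-- A state on a PEA: a `[0,1]`-valued map, additive on existing sums, sending
`0 ↦ 0` and `1 ↦ 1`. -/
def IsState (s : E → ℝ) : Prop :=
  s P.zero = 0 ∧ s P.one = 1 ∧ (∀ a, 0 ≤ s a ∧ s a ≤ 1) ∧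
    ∀ a b, P.D a b → s (P.add a b) = s a + s b

/-- An `(n+1)`-valued discrete state: a state whose range is `{0, 1/n, …, 1}`. -/
def IsDiscreteState (n : ℕ) (s : E → ℝ) : Prop :=
  P.IsState s ∧ Set.range s = {x : ℝ | ∃ i ≤ n, x = (i : ℝ) / n}

/-- An ideal: a nonempty downward closed subset closed under existing sums. -/
def IsIdeal (I : Set E) : Prop :=
  I.Nonempty ∧ (∀ a i, i ∈ I → P.le a i → a ∈ I) ∧
    ∀ i j, i ∈ I → j ∈ I → P.D i j → P.add i j ∈ I

/-- A normal ideal: `a + i = j + a` implies `i ∈ I ↔ j ∈ I`. -/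
def IsNormalIdeal (I : Set E) : Prop :=
  P.IsIdeal I ∧ ∀ a i j, P.D a i → P.D j a → P.add a i = P.add j a → (i ∈ I ↔ j ∈ I)

/-- A maximal ideal: proper and not properly contained in a proper ideal. -/
def IsMaximalIdeal (I : Set E) : Prop :=
  P.IsIdeal I ∧ P.one ∉ I ∧ ∀ J, P.IsIdeal J → P.one ∉ J → I ⊆ J → I = J

/-- `n`-fold partial multiple of an element. -/
def nmul : ℕ → E → E
  | 0, _ => P.zero
  | k + 1, a => P.add (nmul k a) a

/-- Definedness of the `n`-fold partial multiple. -/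
def nmulD : ℕ → E → Prop
  | 0, _ => True
  | k + 1, a => nmulD k a ∧ P.D (P.nmul k a) a

/-- The set of elements of infinite isotropic index. -/
def Infinit : Set E := {a | ∀ k, P.nmulD k a}

/-- An `n`-decomposition of a PEA. -/
def IsNDecomp (n : ℕ) (F : ℕ → Set E) : Prop :=
  (∀ i, i ≤ n → (F i).Nonempty) ∧
  (∀ i j, i ≤ n → j ≤ n → i ≠ j → F i ∩ F j = ∅) ∧
  ((⋃ i ∈ Set.Iic n, F i) = Set.univ) ∧
  (∀ i, i ≤ n → P.lneg '' F i = F (n - i) ∧ P.rneg '' F i = F (n - i)) ∧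
  (∀ i j, i ≤ n → j ≤ n → ∀ x ∈ F i, ∀ y ∈ F j, P.D x y →
     i + j ≤ n ∧ P.add x y ∈ F (i + j))

/-- An `n`-perfect PEA: an `n`-decomposition with all sums `Eᵢ + Eⱼ`, `i+j < n`,
existing, and whose bottom slice is the unique maximal ideal. -/
def IsNPerfect (n : ℕ) (F : ℕ → Set E) : Prop :=
  P.IsNDecomp n F ∧
  (∀ i j, i + j < n → ∀ x ∈ F i, ∀ y ∈ F j, P.D x y) ∧
  (P.IsMaximalIdeal (F 0) ∧ ∀ J, P.IsMaximalIdeal J → J = F 0)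

end PEA

namespace PEA

variable {E : Type} (P : PEA E)

lemma lneg_spec (a : E) : P.D (P.lneg a) a ∧ P.add (P.lneg a) a = P.one :=
  (P.compl_left a).choose_spec.1

lemma rneg_spec (a : E) : P.D a (P.rneg a) ∧ P.add a (P.rneg a) = P.one :=
  (P.compl_right a).choose_spec.1

lemma lneg_rneg (a : E) : P.lneg (P.rneg a) = a :=
  ((P.compl_left (P.rneg a)).choose_spec.2 a ⟨(P.rneg_spec a).1, (P.rneg_spec a).2⟩).symm

lemma rneg_lneg (a : E) : P.rneg (P.lneg a) = a :=
  ((P.compl_right (P.lneg a)).choose_spec.2 a ⟨(P.lneg_spec a).1, (P.lneg_spec a).2⟩).symm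

end PEA

/-- a PEA admits an `(n+1)`-valued discrete state iff it has an
`n`-decomposition. -/
theorem stmt6 {E : Type} (P : PEA E) (n : ℕ) (hn : 1 ≤ n) :
    (∃ s : E → ℝ, P.IsDiscreteState n s) ↔ ∃ F : ℕ → Set E, P.IsNDecomp n F := by
  have hn0 : (n : ℝ) ≠ 0 := Nat.cast_ne_zero.mpr (by omega)
  have hinj : ∀ i j : ℕ, (i : ℝ) / n = (j : ℝ) / n → i = j := by
    intro i j h
    field_simp at h
    exact_mod_cast h
  constructor
  · rintro ⟨s, ⟨h0, h1, hbd, hadd⟩, hrange⟩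
    have hlneg : ∀ a, s (P.lneg a) = 1 - s a := by
      intro a
      have h := hadd _ _ (P.lneg_spec a).1
      rw [(P.lneg_spec a).2, h1] at h
      linarith
    have hrneg : ∀ a, s (P.rneg a) = 1 - s a := by
      intro a
      have h := hadd _ _ (P.rneg_spec a).1
      rw [(P.rneg_spec a).2, h1] at h
      linarith
    refine ⟨fun i => {x | s x = (i : ℝ) / n}, ?_, ?_, ?_, ?_, ?_⟩
    · intro i hi
      have : ((i : ℝ) / n) ∈ Set.range s := by
        rw [hrange]; exact ⟨i, hi, rfl⟩
      obtain ⟨a, ha⟩ := this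
      exact ⟨a, ha⟩
    · intro i j _ _ hij
      ext a
      simp only [Set.mem_inter_iff, Set.mem_setOf_eq, Set.mem_empty_iff_false, iff_false]
      rintro ⟨ha, hb⟩
      exact hij (hinj i j (ha ▸ hb ▸ rfl))
    · ext a
      simp only [Set.mem_iUnion, Set.mem_univ, iff_true, Set.mem_Iic, Set.mem_setOf_eq]
      have : s a ∈ Set.range s := ⟨a, rfl⟩
      rw [hrange] at this
      obtain ⟨i, hi, h⟩ := this
      exact ⟨i, hi, h⟩
    · intro i hi
      have key : ∀ a : E, s a = (i : ℝ) / n → s (P.lneg a) = ((n - i : ℕ) : ℝ) / n ∧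
          s (P.rneg a) = ((n - i : ℕ) : ℝ) / n := by
        intro a ha
        have hc : ((n - i : ℕ) : ℝ) = (n : ℝ) - i := by
          push_cast [Nat.cast_sub hi]; ring
        constructor
        · rw [hlneg, ha, hc]; field_simp
        · rw [hrneg, ha, hc]; field_simp
      constructor
      · ext b
        simp only [Set.mem_image, Set.mem_setOf_eq]
        constructor
        · rintro ⟨a, ha, rfl⟩
          exact (key a ha).1
        · intro hb
          refine ⟨P.rneg b, ?_, P.lneg_rneg b⟩
          rw [hrneg, hb, Nat.cast_sub hi]
          field_simp
          ring
      · ext b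
        simp only [Set.mem_image, Set.mem_setOf_eq]
        constructor
        · rintro ⟨a, ha, rfl⟩
          exact (key a ha).2
        · intro hb
          refine ⟨P.lneg b, ?_, P.rneg_lneg b⟩
          rw [hlneg, hb, Nat.cast_sub hi]
          field_simp
          ring
    · intro i j hi hj x hx y hy hD
      have hsum : s (P.add x y) = ((i + j : ℕ) : ℝ) / n := by
        rw [hadd x y hD, hx, hy]
        push_cast
        ring
      have : s (P.add x y) ∈ Set.range s := ⟨_, rfl⟩
      rw [hrange] at this
      obtain ⟨k, hk, hkeq⟩ := this
      have : i + j = k := hinj _ _ (hsum ▸ hkeq)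
      exact ⟨this ▸ hk, hsum⟩
  · rintro ⟨F, hne, hdisj, huniv, hcompl, hsum⟩
    have hex : ∀ a : E, ∃ i, i ≤ n ∧ a ∈ F i := by
      intro a
      have : a ∈ ⋃ i ∈ Set.Iic n, F i := huniv ▸ Set.mem_univ a
      simpa using this
    choose idx hidx_le hidx_mem using hex
    have huniq : ∀ a i, i ≤ n → a ∈ F i → idx a = i := by
      intro a i hi ha
      by_contra h
      have hmem : a ∈ F (idx a) ∩ F i := ⟨hidx_mem a, ha⟩
      rw [hdisj (idx a) i (hidx_le a) hi h] at hmem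
      exact hmem
    have hzero : idx P.zero = 0 := by
      have h := hsum _ _ (hidx_le P.zero) (hidx_le P.zero) _ (hidx_mem P.zero) _
        (hidx_mem P.zero) (P.D_zero_right P.zero)
      rw [P.add_zero] at h
      have := huniq _ _ h.1 h.2
      omega
    have hone : idx P.one = n := by
      have hz : P.lneg P.one = P.zero :=
        ((P.compl_left P.one).choose_spec.2 P.zero ⟨P.D_zero_left _, P.zero_add _⟩).symm
      have := (hcompl _ (hidx_le P.one)).1
      have hmem : P.zero ∈ F (n - idx P.one) := by
        rw [← this]; exact ⟨P.one, hidx_mem P.one, hz⟩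
      have h2 := huniq _ _ (by omega) hmem
      rw [hzero] at h2
      have hle := hidx_le P.one
      omega
    refine ⟨fun a => (idx a : ℝ) / n, ⟨?_, ?_, ?_, ?_⟩, ?_⟩
    · show (idx P.zero : ℝ) / n = 0
      rw [hzero]; simp
    · show (idx P.one : ℝ) / n = 1
      rw [hone]; field_simp
    · intro a
      constructor
      · positivity
      · rw [div_le_one (by positivity)]
        exact_mod_cast hidx_le a
    · intro a b hD
      have h := hsum _ _ (hidx_le a) (hidx_le b) _ (hidx_mem a) _ (hidx_mem b) hD
      show (idx (P.add a b) : ℝ) / n = (idx a : ℝ) / n + (idx b : ℝ) / n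
      rw [huniq _ _ h.1 h.2]
      push_cast
      ring
    · ext x
      simp only [Set.mem_range, Set.mem_setOf_eq]
      constructor
      · rintro ⟨a, rfl⟩
        exact ⟨idx a, hidx_le a, rfl⟩
      · rintro ⟨i, hi, rfl⟩
        obtain ⟨a, ha⟩ := hne i hi
        exact ⟨a, by rw [huniq a i hi ha]⟩
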